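/- Let (μ, (c_k)) be scalar Gårding–Wightman data on X with associated operators J_k, J'_k on L²(X, μ; ℂ). Assume μ̃, the pushforward of μ under x ↦ 1−x, is mutually absolutely continuous with μ, and that there is a measurable ρ : X → ℂ with |ρ(x)| = 1 for μ-a.e. x satisfying ρ(x)·conj(ρ(1−x)) = 1 for μ-a.e. x and, for every k ≥ 1, ρ(x)·conj(c_k(1−x)) = (−1)^k · c_k(x) · ρ(x+δ_k) for μ-a.e. x. Then the map S defined by (Sf)(x) = ρ(x) · √((dμ̃/dμ)(x)) · conj(f(1−x)) is a well-defined norm-preserving, additive, conjugate-homogeneous involution of L²(X, μ; ℂ) that commutes with every J_k and every J'_k. -/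

import Mathlib

/-!
Common setup: `GWX` is the compact abelian group `X = ∏_{k ≥ 1} {0,1}` of 0-1 sequences
(with componentwise addition mod 2 and the product σ-algebra, which is generated by the
sets `X_k = {x : x_k = 1}`).  The coordinate `i : ℕ` of `x : GWX` represents the paper's
coordinate `x_{i+1}`, so the Lean index `k : ℕ` corresponds to the paper's index `k + 1`
throughout; in particular the paper's sign `(-1)^k` becomes `(-1)^(k+1)` here.
-/

open MeasureTheory Complex Filter
open scoped ENNReal

noncomputable section

abbrev GWX : Type := ℕ → ZMod 2

/-- `δ_k`: the sequence with `1` in the `k`-th place (the paper's `(k+1)`-th place)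
and `0` elsewhere. -/
def gwDelta (k : ℕ) : GWX := fun i => if i = k then 1 else 0

/-- The componentwise complement `x ↦ 1 - x`. -/
def gwFlip (x : GWX) : GWX := fun i => 1 - x i

/-- The sign `(-1)^{x_1 + ⋯ + x_{k-1} + 1}` of the paper, for the paper's index `k + 1`. -/
def gwSign (k : ℕ) (x : GWX) : ℂ := (-1 : ℂ) ^ ((∑ i ∈ Finset.range k, (x i).val) + 1)

lemma zmod2_sub_add (a b : ZMod 2) : a - b = a + b := by revert a b; decide

lemma gwFlip_invol : Function.Involutive gwFlip := fun x => funext fun i => by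
  simp [gwFlip]

lemma gwShift_invol (k : ℕ) : Function.Involutive (· + gwDelta k) := fun x => by
  funext i
  show x i + gwDelta k i + gwDelta k i = x i
  have : gwDelta k i + gwDelta k i = 0 := by
    rcases (by decide : ∀ a : ZMod 2, a + a = 0) (gwDelta k i) with h
    exact h
  rw [add_assoc, this, add_zero]

lemma gwFlip_add (k : ℕ) (x : GWX) : gwFlip (x + gwDelta k) = gwFlip x + gwDelta k := by
  funext i
  show 1 - (x i + gwDelta k i) = (1 - x i) + gwDelta k i
  rcases (by decide : ∀ a b : ZMod 2, 1 - (a + b) = (1 - a) + b) (x i) (gwDelta k i) with h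
  exact h

lemma gwFlip_measurable : Measurable gwFlip :=
  measurable_pi_iff.2 fun i =>
    (Measurable.of_discrete (f := fun a : ZMod 2 => 1 - a)).comp (measurable_pi_apply i)

lemma gwShift_measurable (k : ℕ) : Measurable (· + gwDelta k : GWX → GWX) :=
  measurable_pi_iff.2 fun i =>
    (Measurable.of_discrete (f := fun a : ZMod 2 => a + gwDelta k i)).comp (measurable_pi_apply i)

def gwFlipE : GWX ≃ᵐ GWX where
  toFun := gwFlip
  invFun := gwFlip
  left_inv := gwFlip_invol
  right_inv := gwFlip_invol
  measurable_toFun := gwFlip_measurable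
  measurable_invFun := gwFlip_measurable

def gwShiftE (k : ℕ) : GWX ≃ᵐ GWX where
  toFun := (· + gwDelta k)
  invFun := (· + gwDelta k)
  left_inv := gwShift_invol k
  right_inv := gwShift_invol k
  measurable_toFun := gwShift_measurable k
  measurable_invFun := gwShift_measurable k

lemma gwFlipE_coe : ⇑gwFlipE = gwFlip := rfl
lemma gwShiftE_coe (k : ℕ) : ⇑(gwShiftE k) = (· + gwDelta k) := rfl

lemma gwSign_flip (k : ℕ) (x : GWX) : gwSign k (gwFlip x) = (-1 : ℂ) ^ k * gwSign k x := by
  unfold gwSign gwFlip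
  have hval : ∀ a : ZMod 2, (1 - a).val = 1 - a.val := by decide
  have hle : ∑ i ∈ Finset.range k, (x i).val ≤ k := by
    calc ∑ i ∈ Finset.range k, (x i).val ≤ ∑ i ∈ Finset.range k, 1 :=
      Finset.sum_le_sum fun i _ => by rcases (by decide : ∀ a : ZMod 2, a.val ≤ 1) (x i) with h; exact h
    _ = k := by simp
  have hsum : ∑ i ∈ Finset.range k, (1 - x i).val
      = k - ∑ i ∈ Finset.range k, (x i).val := by
    simp only [hval]
    have hadd : ∑ i ∈ Finset.range k, (1 - (x i).val) + ∑ i ∈ Finset.range k, (x i).val = k := by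
      rw [← Finset.sum_add_distrib]
      have : ∀ i ∈ Finset.range k, (1 - (x i).val) + (x i).val = 1 := by
        intro i _
        have : (x i).val ≤ 1 := by rcases (by decide : ∀ a : ZMod 2, a.val ≤ 1) (x i) with h; exact h
        omega
      rw [Finset.sum_congr rfl this]; simp
    omega
  rw [hsum]
  set S := ∑ i ∈ Finset.range k, (x i).val
  have h1 : (k - S) + S = k := Nat.sub_add_cancel hle
  have : ((-1 : ℂ) ^ (k - S + 1)) * ((-1) ^ (S + 1)) = (-1) ^ k := by
    rw [← pow_add]
    have : k - S + 1 + (S + 1) = k + 2 := by omega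
    rw [this, pow_add]; norm_num
  have hsq : ((-1 : ℂ) ^ (S + 1)) * ((-1) ^ (S + 1)) = 1 := by
    rw [← pow_add, ← two_mul, pow_mul]; norm_num
  calc (-1 : ℂ) ^ (k - S + 1) = (-1) ^ (k - S + 1) * ((-1) ^ (S+1) * (-1)^(S+1)) := by rw [hsq, mul_one]
  _ = ((-1)^(k - S + 1) * (-1)^(S+1)) * (-1)^(S+1) := by ring
  _ = (-1)^k * (-1)^(S+1) := by rw [this]

lemma gwSign_conj (k : ℕ) (x : GWX) : (starRingEnd ℂ) (gwSign k x) = gwSign k x := by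
  unfold gwSign
  rw [map_pow, map_neg, map_one]

lemma gw_neg_one_k (k : ℕ) : ((-1:ℂ)^k) * ((-1:ℂ)^(k+1)) = -1 := by
  rw [← pow_add, show k + (k+1) = 2*k+1 by omega, pow_succ, pow_mul]; norm_num

lemma gw_flip_sign_pt (k : ℕ) (x : GWX) :
    (-1:ℂ) ^ ((gwFlip x) k).val * (-Complex.I) = (-1:ℂ) ^ ((x k).val) * Complex.I := by
  have h : gwFlip x k = 1 - x k := rfl
  rcases (show ∀ a : ZMod 2, a = 0 ∨ a = 1 by decide) (x k) with h0 | h0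
  · rw [h, h0, show ((1 - 0 : ZMod 2)).val = 1 by decide, show ((0 : ZMod 2)).val = 0 by decide]
    simp
  · rw [h, h0, show ((1 - 1 : ZMod 2)).val = 0 by decide, show ((1 : ZMod 2)).val = 1 by decide]
    simp

section MeasureLemmas

lemma gw_ae_comp {μ : Measure GWX} {g : GWX → GWX} (hg : Measurable g)
    (hac : μ.map g ≪ μ) {p : GWX → Prop} (h : ∀ᵐ x ∂μ, p x) :
    ∀ᵐ x ∂μ, p (g x) :=
  ae_of_ae_map hg.aemeasurable (hac.ae_le h)

lemma gw_map_withDensity (μ : Measure GWX) (e : GWX ≃ᵐ GWX) {f : GWX → ℝ≥0∞}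
    (hf : Measurable f) :
    (μ.withDensity f).map e = (μ.map e).withDensity (f ∘ e.symm) := by
  ext s hs
  rw [Measure.map_apply e.measurable hs, withDensity_apply _ (e.measurable hs),
    withDensity_apply _ hs,
    setLIntegral_map hs (hf.comp e.symm.measurable) e.measurable]
  refine setLIntegral_congr_fun (e.measurable hs) (fun x _ => ?_)
  simp

end MeasureLemmas


/-- given scalar Gårding–Wightman data `(μ, (c_k))` with associated operators
`J_k, J'_k` on `L²(X, μ; ℂ)`, if `μ̃ = (x ↦ 1-x)_* μ` is mutually absolutely continuous with
`μ` and there is a measurable unimodular `ρ` with `ρ(x) conj(ρ(1-x)) = 1` and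
`ρ(x) conj(c_k(1-x)) = (-1)^k c_k(x) ρ(x + δ_k)` a.e. (paper's `k ≥ 1`; here `(-1)^(k+1)`),
then `(S f)(x) = ρ(x) √((dμ̃/dμ)(x)) conj(f(1-x))` defines a norm-preserving, additive,
conjugate-homogeneous involution of `L²(X, μ; ℂ)` commuting with every `J_k` and `J'_k`. -/
theorem gw_real_structure_of_rho
    (μ : Measure GWX) [SigmaFinite μ]
    (hq : ∀ k : ℕ, μ.map (· + gwDelta k) ≪ μ ∧ μ ≪ μ.map (· + gwDelta k))
    (c : ℕ → GWX → ℂ)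
    (hcm : ∀ k, Measurable (c k))
    (hc1 : ∀ k, ∀ᵐ x ∂μ, ‖c k x‖ = 1)
    (hc2 : ∀ k, ∀ᵐ x ∂μ, (starRingEnd ℂ) (c k x) = c k (x + gwDelta k))
    (hc3 : ∀ k l, ∀ᵐ x ∂μ, c k x * c l (x + gwDelta k) = c l x * c k (x + gwDelta l))
    (J J' : ℕ → Lp ℂ 2 μ → Lp ℂ 2 μ)
    (hJ : ∀ k f, (↑(J k f) : GWX → ℂ) =ᵐ[μ] fun x =>
      gwSign k x * Complex.I * c k x *
        (Real.sqrt (((μ.map (· + gwDelta k)).rnDeriv μ x).toReal) : ℂ) *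
        (↑f : GWX → ℂ) (x + gwDelta k))
    (hJ' : ∀ k f, (↑(J' k f) : GWX → ℂ) =ᵐ[μ] fun x =>
      (-1 : ℂ) ^ (x k).val * Complex.I * (↑(J k f) : GWX → ℂ) x)
    (hflip : μ.map gwFlip ≪ μ ∧ μ ≪ μ.map gwFlip)
    (ρ : GWX → ℂ)
    (hρm : Measurable ρ)
    (hρ1 : ∀ᵐ x ∂μ, ‖ρ x‖ = 1)
    (hρ2 : ∀ᵐ x ∂μ, ρ x * (starRingEnd ℂ) (ρ (gwFlip x)) = 1)
    (hρ3 : ∀ k : ℕ, ∀ᵐ x ∂μ,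
      ρ x * (starRingEnd ℂ) (c k (gwFlip x)) =
        (-1 : ℂ) ^ (k + 1) * c k x * ρ (x + gwDelta k)) :
    ∃ S : Lp ℂ 2 μ → Lp ℂ 2 μ,
      (∀ f, (↑(S f) : GWX → ℂ) =ᵐ[μ] fun x =>
        ρ x * (Real.sqrt (((μ.map gwFlip).rnDeriv μ x).toReal) : ℂ) *
          (starRingEnd ℂ) ((↑f : GWX → ℂ) (gwFlip x))) ∧
      (∀ f, ‖S f‖ = ‖f‖) ∧
      (∀ f g, S (f + g) = S f + S g) ∧
      (∀ (α : ℂ) (f : Lp ℂ 2 μ), S (α • f) = (starRingEnd ℂ) α • S f) ∧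
      (∀ f, S (S f) = f) ∧
      (∀ k f, S (J k f) = J k (S f)) ∧
      (∀ k f, S (J' k f) = J' k (S f)) := by
  classical
  -- setup
  haveI hSFf : SigmaFinite (μ.map gwFlip) := gwFlipE.sigmaFinite_map
  have hSFs : ∀ k, SigmaFinite (μ.map (· + gwDelta k)) := fun k => (gwShiftE k).sigmaFinite_map
  set D : GWX → ℝ≥0∞ := (μ.map gwFlip).rnDeriv μ with hDdef
  have hDm : Measurable D := Measure.measurable_rnDeriv _ _
  have hwd : μ.withDensity D = μ.map gwFlip := Measure.withDensity_rnDeriv_eq _ _ hflip.1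
  have hDlt : ∀ᵐ x ∂μ, D x < ∞ := Measure.rnDeriv_lt_top _ _
  -- a.e. transport through flip and shifts
  have aeF : ∀ {p : GWX → Prop}, (∀ᵐ x ∂μ, p x) → ∀ᵐ x ∂μ, p (gwFlip x) :=
    fun h => gw_ae_comp gwFlip_measurable hflip.1 h
  have aeT : ∀ (k : ℕ) {p : GWX → Prop}, (∀ᵐ x ∂μ, p x) → ∀ᵐ x ∂μ, p (x + gwDelta k) :=
    fun k {p} h => gw_ae_comp (gwShift_measurable k) (hq k).1 h
  -- key lintegral identity
  have key : ∀ φ : GWX → ℝ≥0∞, AEMeasurable φ μ →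
      ∫⁻ x, D x * φ (gwFlip x) ∂μ = ∫⁻ x, φ x ∂μ := by
    intro φ hφ
    have hφF : AEMeasurable (fun x => φ (gwFlip x)) μ :=
      ⟨fun x => hφ.mk φ (gwFlip x), hφ.measurable_mk.comp gwFlip_measurable,
        aeF hφ.ae_eq_mk⟩
    calc ∫⁻ x, D x * φ (gwFlip x) ∂μ
        = ∫⁻ x, φ (gwFlip x) ∂(μ.withDensity D) := by
          rw [lintegral_withDensity_eq_lintegral_mul₀ hDm.aemeasurable hφF]; rfl
      _ = ∫⁻ x, φ (gwFlip x) ∂(μ.map gwFlip) := by rw [hwd]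
      _ = ∫⁻ x, φ (gwFlip (gwFlip x)) ∂μ :=
          lintegral_map' (hφF.mono' hflip.1) gwFlip_measurable.aemeasurable
      _ = ∫⁻ x, φ x ∂μ := by simp [gwFlip_invol _]
  -- the defining map
  set Tfun : (GWX → ℂ) → GWX → ℂ := fun g x =>
    ρ x * (Real.sqrt ((D x).toReal) : ℂ) * (starRingEnd ℂ) (g (gwFlip x)) with hTdef
  have hT_congr : ∀ {g₁ g₂ : GWX → ℂ}, g₁ =ᵐ[μ] g₂ → Tfun g₁ =ᵐ[μ] Tfun g₂ := by
    intro g₁ g₂ h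
    filter_upwards [aeF h] with x hx
    simp only [hTdef, hx]
  have hT_aesm : ∀ {g : GWX → ℂ}, AEStronglyMeasurable g μ →
      AEStronglyMeasurable (Tfun g) μ := by
    intro g hg
    have h1 : AEStronglyMeasurable (fun x => g (gwFlip x)) μ :=
      ⟨fun x => hg.mk g (gwFlip x),
        (hg.stronglyMeasurable_mk.measurable.comp gwFlip_measurable).stronglyMeasurable,
        aeF hg.ae_eq_mk⟩
    exact ((hρm.aestronglyMeasurable.mul
      ((Complex.measurable_ofReal.comp
        (Real.continuous_sqrt.measurable.comp hDm.ennreal_toReal)).aestronglyMeasurable)).mul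
      (Complex.continuous_conj.comp_aestronglyMeasurable h1))
  have hT_snorm : ∀ {g : GWX → ℂ}, AEStronglyMeasurable g μ →
      eLpNorm (Tfun g) 2 μ = eLpNorm g 2 μ := by
    intro g hg
    rw [eLpNorm_eq_lintegral_rpow_enorm_toReal two_ne_zero ENNReal.ofNat_ne_top,
      eLpNorm_eq_lintegral_rpow_enorm_toReal two_ne_zero ENNReal.ofNat_ne_top]
    congr 1
    simp only [enorm_eq_nnnorm]
    have hptw : (fun x => (‖Tfun g x‖₊ : ℝ≥0∞) ^ (2:ℝ≥0∞).toReal)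
        =ᵐ[μ] fun x => D x * ((fun y => (‖g y‖₊ : ℝ≥0∞) ^ (2:ℝ≥0∞).toReal) (gwFlip x)) := by
      filter_upwards [hρ1, hDlt] with x hx hDx
      have h2 : (2:ℝ≥0∞).toReal = (2:ℝ) := by norm_num
      have hn : ‖Tfun g x‖ = Real.sqrt ((D x).toReal) * ‖g (gwFlip x)‖ := by
        simp only [hTdef, norm_mul, RCLike.norm_conj, hx, one_mul,
          Complex.norm_real, Real.norm_eq_abs, _root_.abs_of_nonneg (Real.sqrt_nonneg _)]
      calc (‖Tfun g x‖₊ : ℝ≥0∞) ^ (2:ℝ≥0∞).toReal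
          = ENNReal.ofReal ‖Tfun g x‖ ^ (2:ℝ) := by rw [ofReal_norm, enorm_eq_nnnorm, h2]
        _ = (ENNReal.ofReal (Real.sqrt ((D x).toReal)) * ENNReal.ofReal ‖g (gwFlip x)‖) ^ (2:ℝ) := by
            rw [hn, ENNReal.ofReal_mul (Real.sqrt_nonneg _)]
        _ = ENNReal.ofReal (Real.sqrt ((D x).toReal)) ^ (2:ℝ) *
              ENNReal.ofReal ‖g (gwFlip x)‖ ^ (2:ℝ) :=
            ENNReal.mul_rpow_of_nonneg _ _ (by norm_num)
        _ = D x * ((‖g (gwFlip x)‖₊ : ℝ≥0∞) ^ (2:ℝ≥0∞).toReal) := by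
            rw [ENNReal.ofReal_rpow_of_nonneg (Real.sqrt_nonneg _) (by norm_num : (0:ℝ) ≤ 2)]
            have : Real.sqrt ((D x).toReal) ^ (2:ℝ) = (D x).toReal := by
              rw [show ((2:ℝ)) = ((2:ℕ):ℝ) by norm_num, Real.rpow_natCast,
                Real.sq_sqrt ENNReal.toReal_nonneg]
            rw [this, ENNReal.ofReal_toReal hDx.ne, ofReal_norm, enorm_eq_nnnorm, h2]
    rw [lintegral_congr_ae hptw]; exact key _ (hg.enorm.pow_const _)
  -- membership in L² and the definition of S
  have hmem : ∀ f : Lp ℂ 2 μ, MemLp (Tfun (↑f : GWX → ℂ)) 2 μ := fun f =>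
    ⟨hT_aesm (Lp.aestronglyMeasurable f),
      by rw [hT_snorm (Lp.aestronglyMeasurable f)]; exact Lp.eLpNorm_lt_top f⟩
  set S : Lp ℂ 2 μ → Lp ℂ 2 μ := fun f => (hmem f).toLp _ with hSdef
  have hScoe : ∀ f, (↑(S f) : GWX → ℂ) =ᵐ[μ] Tfun (↑f : GWX → ℂ) := fun f =>
    MemLp.coeFn_toLp (hmem f)
  have hSJ : ∀ k f, S (J k f) = J k (S f) := by
    intro k f
    haveI := hSFs k
    set d : GWX → ℝ≥0∞ := (μ.map (· + gwDelta k)).rnDeriv μ with hddef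
    have hdm : Measurable d := Measure.measurable_rnDeriv _ _
    have hwdd : μ.withDensity d = μ.map (· + gwDelta k) :=
      Measure.withDensity_rnDeriv_eq _ _ (hq k).1
    have hcomp1 : gwFlip ∘ (· + gwDelta k) = fun x => gwFlip x + gwDelta k := by
      funext x; exact gwFlip_add k x
    have hcomp2 : (· + gwDelta k) ∘ gwFlip = fun x => gwFlip x + gwDelta k := rfl
    have e1 : μ.withDensity (fun x => D x * d (gwFlip x))
        = μ.map (fun x => gwFlip x + gwDelta k) := by
      rw [show (fun x => D x * d (gwFlip x)) = D * (d ∘ gwFlip) from rfl,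
        withDensity_mul _ hDm (hdm.comp gwFlip_measurable), hwd]
      have h2 : (μ.map gwFlip).withDensity (d ∘ gwFlip) = (μ.withDensity d).map gwFlipE := by
        rw [gw_map_withDensity μ gwFlipE hdm]; rfl
      rw [h2, hwdd, show ⇑gwFlipE = gwFlip from rfl,
        Measure.map_map gwFlip_measurable (gwShift_measurable k), hcomp1]
    have e2 : μ.withDensity (fun x => d x * D (x + gwDelta k))
        = μ.map (fun x => gwFlip x + gwDelta k) := by
      rw [show (fun x => d x * D (x + gwDelta k)) = d * (D ∘ (· + gwDelta k)) from rfl,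
        withDensity_mul _ hdm (hDm.comp (gwShift_measurable k)), hwdd]
      have h2 : (μ.map (· + gwDelta k)).withDensity (D ∘ (· + gwDelta k))
          = (μ.withDensity D).map (gwShiftE k) := by
        rw [gw_map_withDensity μ (gwShiftE k) hDm]; rfl
      rw [h2, hwd, show ⇑(gwShiftE k) = (· + gwDelta k) from rfl,
        Measure.map_map (gwShift_measurable k) gwFlip_measurable, hcomp2]
    have hco : ∀ᵐ x ∂μ, D x * d (gwFlip x) = d x * D (x + gwDelta k) := by
      have r1 := Measure.rnDeriv_withDensity μ
        (show Measurable (fun x => D x * d (gwFlip x)) from hDm.mul (hdm.comp gwFlip_measurable))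
      have r2 := Measure.rnDeriv_withDensity μ
        (show Measurable (fun x => d x * D (x + gwDelta k)) from
          hdm.mul (hDm.comp (gwShift_measurable k)))
      rw [e1] at r1; rw [e2] at r2
      filter_upwards [r1.symm.trans r2] with x hx using hx
    have hdlt : ∀ᵐ x ∂μ, d x < ∞ := Measure.rnDeriv_lt_top _ _
    have hcos : ∀ᵐ x ∂μ, Real.sqrt ((D x).toReal) * Real.sqrt ((d (gwFlip x)).toReal)
        = Real.sqrt ((d x).toReal) * Real.sqrt ((D (x + gwDelta k)).toReal) := by
      filter_upwards [hco, hDlt, hdlt, aeF hdlt, aeT k hDlt] with x h h1 h2 h3 h4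
      rw [← Real.sqrt_mul ENNReal.toReal_nonneg, ← Real.sqrt_mul ENNReal.toReal_nonneg,
        ← ENNReal.toReal_mul, ← ENNReal.toReal_mul, h]
    refine Lp.ext ?_
    have lhs1 : (↑(S (J k f)) : GWX → ℂ) =ᵐ[μ] Tfun (↑(J k f) : GWX → ℂ) := hScoe _
    have lhs2 : Tfun (↑(J k f) : GWX → ℂ) =ᵐ[μ] Tfun (fun x =>
        gwSign k x * Complex.I * c k x * (Real.sqrt ((d x).toReal) : ℂ) *
          (↑f : GWX → ℂ) (x + gwDelta k)) := hT_congr (hJ k f)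
    have main : Tfun (fun y =>
        gwSign k y * Complex.I * c k y * (Real.sqrt ((d y).toReal) : ℂ) *
          (↑f : GWX → ℂ) (y + gwDelta k)) =ᵐ[μ] fun x =>
        gwSign k x * Complex.I * c k x * (Real.sqrt ((d x).toReal) : ℂ) *
          Tfun (↑f : GWX → ℂ) (x + gwDelta k) := by
      filter_upwards [hρ3 k, hcos] with x h3 hs
      have hsC : ((Real.sqrt ((D x).toReal) : ℂ)) * ((Real.sqrt ((d (gwFlip x)).toReal) : ℂ))
          = ((Real.sqrt ((d x).toReal) : ℂ)) * ((Real.sqrt ((D (x + gwDelta k)).toReal) : ℂ)) := by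
        exact_mod_cast congrArg Complex.ofReal hs
      simp only [hTdef, map_mul, map_pow, map_neg, map_one, Complex.conj_I,
        Complex.conj_ofReal, gwSign_conj, gwSign_flip, gwFlip_add]
      linear_combination
        ((Real.sqrt ((D x).toReal) : ℂ) * (Real.sqrt ((d (gwFlip x)).toReal) : ℂ) *
          (-1:ℂ)^k * gwSign k x * (-Complex.I) *
          (starRingEnd ℂ) ((↑f : GWX → ℂ) (gwFlip x + gwDelta k))) * h3 +
        (c k x * ρ (x + gwDelta k) * (Real.sqrt ((D x).toReal) : ℂ) *
          (Real.sqrt ((d (gwFlip x)).toReal) : ℂ) * gwSign k x * (-Complex.I) *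
          (starRingEnd ℂ) ((↑f : GWX → ℂ) (gwFlip x + gwDelta k))) * gw_neg_one_k k +
        (c k x * ρ (x + gwDelta k) * gwSign k x * Complex.I *
          (starRingEnd ℂ) ((↑f : GWX → ℂ) (gwFlip x + gwDelta k))) * hsC
    have rhs3 : (↑(J k (S f)) : GWX → ℂ) =ᵐ[μ] fun x =>
        gwSign k x * Complex.I * c k x * (Real.sqrt ((d x).toReal) : ℂ) *
          Tfun (↑f : GWX → ℂ) (x + gwDelta k) := by
      filter_upwards [hJ k (S f), aeT k (hScoe f)] with x h1 h2
      rw [h1, h2]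
    exact lhs1.trans (lhs2.trans (main.trans rhs3.symm))
  refine ⟨S, fun f => hScoe f, ?_, ?_, ?_, ?_, ?_, ?_⟩
  · -- norm preservation
    intro f
    rw [hSdef]
    rw [Lp.norm_toLp _ _, hT_snorm (Lp.aestronglyMeasurable f), Lp.norm_def]
  · -- additivity
    intro f g
    refine Lp.ext ?_
    have h1 : (↑(S (f + g)) : GWX → ℂ) =ᵐ[μ] Tfun (↑f + ↑g : GWX → ℂ) :=
      (hScoe (f + g)).trans (hT_congr (Lp.coeFn_add f g))
    have h2 : (↑(S f + S g) : GWX → ℂ) =ᵐ[μ] fun x => Tfun (↑f) x + Tfun (↑g) x := by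
      filter_upwards [Lp.coeFn_add (S f) (S g), hScoe f, hScoe g] with x ha hb hc
      rw [ha]; simp [hb, hc]
    have h3 : Tfun (↑f + ↑g : GWX → ℂ) =ᵐ[μ] fun x => Tfun (↑f) x + Tfun (↑g) x :=
      ae_of_all _ fun x => by simp only [hTdef, Pi.add_apply, map_add]; ring
    exact h1.trans (h3.trans h2.symm)
  · -- conjugate homogeneity
    intro α f
    refine Lp.ext ?_
    have h1 : (↑(S (α • f)) : GWX → ℂ) =ᵐ[μ] Tfun (α • (↑f : GWX → ℂ)) :=
      (hScoe (α • f)).trans (hT_congr (Lp.coeFn_smul α f))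
    have h2 : (↑((starRingEnd ℂ) α • S f) : GWX → ℂ) =ᵐ[μ]
        fun x => (starRingEnd ℂ) α • Tfun (↑f) x := by
      filter_upwards [Lp.coeFn_smul ((starRingEnd ℂ) α) (S f), hScoe f] with x ha hb
      rw [ha]; simp [hb]
    have h3 : Tfun (α • (↑f : GWX → ℂ)) =ᵐ[μ] fun x => (starRingEnd ℂ) α • Tfun (↑f) x :=
      ae_of_all _ fun x => by
        simp only [hTdef, Pi.smul_apply, smul_eq_mul, map_mul]; ring
    exact h1.trans (h3.trans h2.symm)
  · -- involution
    intro f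
    -- D x * D (gwFlip x) = 1 a.e.
    have h1 : μ.withDensity (fun x => D x * D (gwFlip x)) = μ := by
      rw [show (fun x => D x * D (gwFlip x)) = D * (D ∘ gwFlip) from rfl,
        withDensity_mul _ hDm (hDm.comp gwFlip_measurable), hwd]
      have h2 : (μ.map gwFlip).withDensity (D ∘ gwFlip) = (μ.withDensity D).map gwFlipE := by
        rw [gw_map_withDensity μ gwFlipE hDm]; rfl
      rw [h2, hwd, show ⇑gwFlipE = gwFlip from rfl,
        Measure.map_map gwFlip_measurable gwFlip_measurable,
        show gwFlip ∘ gwFlip = id from funext fun x => gwFlip_invol x, Measure.map_id]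
    have hD2 : ∀ᵐ x ∂μ, D x * D (gwFlip x) = 1 := by
      have := Measure.rnDeriv_withDensity μ
        (show Measurable (fun x => D x * D (gwFlip x)) from hDm.mul (hDm.comp gwFlip_measurable))
      rw [h1] at this
      filter_upwards [this.symm.trans (Measure.rnDeriv_self μ)] with x hx
      exact hx
    have hsq : ∀ᵐ x ∂μ, (Real.sqrt ((D x).toReal)) * Real.sqrt ((D (gwFlip x)).toReal) = 1 := by
      filter_upwards [hD2, hDlt, aeF hDlt] with x hx h1x h2x
      rw [← Real.sqrt_mul ENNReal.toReal_nonneg, ← ENNReal.toReal_mul, hx]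
      simp
    refine Lp.ext ?_
    have h2 : (↑(S (S f)) : GWX → ℂ) =ᵐ[μ] Tfun (Tfun (↑f : GWX → ℂ)) :=
      (hScoe (S f)).trans (hT_congr (hScoe f))
    refine h2.trans ?_
    have h3 : ∀ᵐ x ∂μ, Tfun (Tfun (↑f : GWX → ℂ)) x = (↑f : GWX → ℂ) x := by
      filter_upwards [hρ2, hsq] with x hx hs
      simp only [hTdef, map_mul, Complex.conj_conj, Complex.conj_ofReal, gwFlip_invol x]
      have : ρ x * ((Real.sqrt ((D x).toReal) : ℝ) : ℂ) *
          ((starRingEnd ℂ) (ρ (gwFlip x)) * ((Real.sqrt ((D (gwFlip x)).toReal) : ℝ) : ℂ) *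
            (↑f : GWX → ℂ) x)
          = (ρ x * (starRingEnd ℂ) (ρ (gwFlip x))) *
            ((((Real.sqrt ((D x).toReal) * Real.sqrt ((D (gwFlip x)).toReal) : ℝ)) : ℂ)) *
            (↑f : GWX → ℂ) x := by push_cast; ring
      rw [this, hx, hs]
      simp
    exact h3
  · exact hSJ
  · -- J' commutation
    intro k f
    refine Lp.ext ?_
    have lhs1 : (↑(S (J' k f)) : GWX → ℂ) =ᵐ[μ] Tfun (↑(J' k f) : GWX → ℂ) := hScoe _
    have lhs2 : Tfun (↑(J' k f) : GWX → ℂ) =ᵐ[μ] Tfun (fun x =>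
        (-1 : ℂ) ^ (x k).val * Complex.I * (↑(J k f) : GWX → ℂ) x) := hT_congr (hJ' k f)
    have main : ∀ x, Tfun (fun y =>
        (-1 : ℂ) ^ (y k).val * Complex.I * (↑(J k f) : GWX → ℂ) y) x
        = (-1 : ℂ) ^ (x k).val * Complex.I * Tfun (↑(J k f) : GWX → ℂ) x := by
      intro x
      simp only [hTdef, map_mul, Complex.conj_I]
      have hconjpow : (starRingEnd ℂ) ((-1 : ℂ) ^ ((gwFlip x) k).val)
          = (-1 : ℂ) ^ ((gwFlip x) k).val := by rw [map_pow, map_neg, map_one]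
      rw [hconjpow]
      have := gw_flip_sign_pt k x
      linear_combination (ρ x * (Real.sqrt ((D x).toReal) : ℂ) *
        (starRingEnd ℂ) ((↑(J k f) : GWX → ℂ) (gwFlip x))) * this
    have rhs3 : (↑(J' k (S f)) : GWX → ℂ) =ᵐ[μ] fun x =>
        (-1 : ℂ) ^ (x k).val * Complex.I * Tfun (↑(J k f) : GWX → ℂ) x := by
      have hc : (↑(J k (S f)) : GWX → ℂ) =ᵐ[μ] Tfun (↑(J k f) : GWX → ℂ) := by
        rw [← hSJ k f]; exact hScoe _
      filter_upwards [hJ' k (S f), hc] with x h1 h2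
      rw [h1, h2]
    exact lhs1.trans ((lhs2.trans (ae_of_all _ main)).trans rhs3.symm)
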